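/- arXiv:2209.08785 — 2 statements merged into one kernel-verified Lean document; each statement's English description precedes it below -/
import Mathlib

section
/- Let Φ be a square matrix with spectral radius ρ(Φ) < 1, and let c : ℕ → ℝⁿ with lim_{t→∞} c(t) = 0. Then lim_{t→∞} ∑_{k=0}^{t-1} Φ^k c(t-1-k) = 0. -/
open Filter
open scoped ENNReal NNReal

/-- Convolution of a geometric sequence with a null sequence tends to zero. -/
lemma convAux {r : ℝ} (hr0 : 0 < r) (hr1 : r < 1) (d : ℕ → ℝ) (hd0 : ∀ t, 0 ≤ d t)
    (hd : Tendsto d atTop (nhds 0)) :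
    Tendsto (fun t => ∑ k ∈ Finset.range t, r ^ k * d (t - 1 - k)) atTop (nhds 0) := by
  have hgeo : ∀ m : ℕ, ∑ k ∈ Finset.range m, r ^ k ≤ (1 - r)⁻¹ := by
    intro m
    refine (Summable.sum_le_tsum (L := SummationFilter.unconditional ℕ) _ (fun k _ => by positivity) ?_).trans_eq ?_
    · exact summable_geometric_of_lt_one hr0.le hr1
    · exact tsum_geometric_of_lt_one hr0.le hr1
  obtain ⟨B, hB⟩ : ∃ B : ℝ, ∀ t, d t ≤ B := by
    obtain ⟨B, hB⟩ := hd.bddAbove_range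
    exact ⟨B, fun t => hB ⟨t, rfl⟩⟩
  set B' : ℝ := max B 0 with hB'def
  have hB'0 : 0 ≤ B' := le_max_right _ _
  have hB' : ∀ t, d t ≤ B' := fun t => (hB t).trans (le_max_left _ _)
  rw [Metric.tendsto_atTop]
  intro ε hε
  set ε₁ : ℝ := ε * (1 - r) / 4 with hε₁def
  have hε₁ : 0 < ε₁ := by
    have : 0 < 1 - r := by linarith
    positivity
  obtain ⟨N₁, hN₁⟩ := Metric.tendsto_atTop.mp hd ε₁ hε₁
  have hN₁' : ∀ j ≥ N₁, d j ≤ ε₁ := by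
    intro j hj
    have := hN₁ j hj
    rw [Real.dist_eq, sub_zero] at this
    exact (le_abs_self _).trans this.le
  -- tail: N₁ * B' * r ^ m → 0
  have htail : Tendsto (fun m : ℕ => (N₁ : ℝ) * B' * r ^ m) atTop (nhds 0) := by
    simpa using (tendsto_pow_atTop_nhds_zero_of_lt_one hr0.le hr1).const_mul ((N₁ : ℝ) * B')
  obtain ⟨N₂, hN₂⟩ := Metric.tendsto_atTop.mp htail (ε / 2) (by positivity)
  have hN₂' : ∀ m ≥ N₂, (N₁ : ℝ) * B' * r ^ m < ε / 2 := by
    intro m hm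
    have := hN₂ m hm
    rw [Real.dist_eq, sub_zero] at this
    exact (le_abs_self _).trans_lt this
  refine ⟨N₁ + N₂ + 1, fun t ht => ?_⟩
  have htN₁ : N₁ ≤ t := by omega
  have hsplit :
      ∑ k ∈ Finset.range t, r ^ k * d (t - 1 - k) =
        (∑ k ∈ Finset.range (t - N₁), r ^ k * d (t - 1 - k)) +
          ∑ k ∈ Finset.Ico (t - N₁) t, r ^ k * d (t - 1 - k) := by
    rw [Finset.range_eq_Ico, Finset.range_eq_Ico]
    exact (Finset.sum_Ico_consecutive _ (Nat.zero_le _) (Nat.sub_le t N₁)).symm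
  have hpart1 : ∑ k ∈ Finset.range (t - N₁), r ^ k * d (t - 1 - k) ≤ ε₁ * (1 - r)⁻¹ := by
    calc ∑ k ∈ Finset.range (t - N₁), r ^ k * d (t - 1 - k)
        ≤ ∑ k ∈ Finset.range (t - N₁), r ^ k * ε₁ := by
          refine Finset.sum_le_sum fun k hk => ?_
          rw [Finset.mem_range] at hk
          have : N₁ ≤ t - 1 - k := by omega
          exact mul_le_mul_of_nonneg_left (hN₁' _ this) (by positivity)
      _ = (∑ k ∈ Finset.range (t - N₁), r ^ k) * ε₁ := by rw [Finset.sum_mul]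
      _ ≤ (1 - r)⁻¹ * ε₁ := mul_le_mul_of_nonneg_right (hgeo _) hε₁.le
      _ = ε₁ * (1 - r)⁻¹ := mul_comm _ _
  have hε₁eq : ε₁ * (1 - r)⁻¹ = ε / 4 := by
    have h1r : (1 : ℝ) - r ≠ 0 := by intro h; linarith [hr1]
    field_simp [hε₁def]
    ring
  have hpart2 : ∑ k ∈ Finset.Ico (t - N₁) t, r ^ k * d (t - 1 - k) < ε / 2 := by
    calc ∑ k ∈ Finset.Ico (t - N₁) t, r ^ k * d (t - 1 - k)
        ≤ ∑ k ∈ Finset.Ico (t - N₁) t, r ^ (t - N₁) * B' := by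
          refine Finset.sum_le_sum fun k hk => ?_
          rw [Finset.mem_Ico] at hk
          have hrk : r ^ k ≤ r ^ (t - N₁) :=
            pow_le_pow_of_le_one hr0.le hr1.le hk.1
          exact mul_le_mul hrk (hB' _) (hd0 _) (by positivity)
      _ = (N₁ : ℝ) * B' * r ^ (t - N₁) := by
          rw [Finset.sum_const, Nat.card_Ico]
          have : t - (t - N₁) = N₁ := by omega
          rw [this, nsmul_eq_mul]
          ring
      _ < ε / 2 := hN₂' _ (by omega)
  have hnn : 0 ≤ ∑ k ∈ Finset.range t, r ^ k * d (t - 1 - k) :=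
    Finset.sum_nonneg fun k _ => by
      have := hd0 (t - 1 - k); positivity
  rw [Real.dist_eq, sub_zero, abs_of_nonneg hnn, hsplit]
  have := hpart1.trans_eq hε₁eq
  linarith

section MatrixBound

attribute [local instance] Matrix.linftyOpNormedRing Matrix.linftyOpNormedAlgebra

private lemma norm_map_complex {n : ℕ} (M : Matrix (Fin n) (Fin n) ℝ) :
    ‖M.map (fun x => (x : ℂ))‖ = ‖M‖ := by
  rw [Matrix.linfty_opNorm_def, Matrix.linfty_opNorm_def]
  congr 1
  congr 1
  funext i
  congr 1
  funext j
  simp [Matrix.map_apply]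

private lemma pow_norm_le {n : ℕ} (Φ : Matrix (Fin n) (Fin n) ℝ)
    (hρ : ∀ z ∈ spectrum ℂ (Φ.map (fun x => (x : ℂ))), ‖z‖ < 1) :
    ∃ C r : ℝ, 0 < r ∧ r < 1 ∧ ∀ (k : ℕ) (v : Fin n → ℝ),
      ‖(Φ ^ k).mulVec v‖ ≤ C * r ^ k * ‖v‖ := by
  rcases Nat.eq_zero_or_pos n with hn | hn
  · subst hn
    refine ⟨1, 1/2, by norm_num, by norm_num, fun k v => ?_⟩
    have h1 : (Φ ^ k).mulVec v = 0 := Subsingleton.elim _ _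
    have h2 : v = 0 := Subsingleton.elim _ _
    rw [h1, h2, norm_zero]
    positivity
  haveI : NeZero n := ⟨hn.ne'⟩
  set A : Matrix (Fin n) (Fin n) ℂ := Φ.map (fun x => (x : ℂ)) with hAdef
  -- spectral radius < 1
  have hsr : spectralRadius ℂ A < 1 := by
    have h := spectrum.spectralRadius_lt_of_forall_lt A (r := 1) ?_
    · simpa using h
    · intro z hz; simpa [← NNReal.coe_lt_coe] using hρ z hz
  -- Gelfand's formula
  obtain ⟨r0, hr0, hr1⟩ := exists_between hsr
  have hgel := spectrum.pow_nnnorm_pow_one_div_tendsto_nhds_spectralRadius A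
  have hev : ∀ᶠ k : ℕ in atTop, (‖A ^ k‖₊ : ℝ≥0∞) ^ (1 / (k : ℝ)) < r0 :=
    hgel.eventually_lt_const hr0
  obtain ⟨K, hK⟩ := (hev.and (eventually_ge_atTop 1)).exists_forall_of_atTop
  have hr0top : r0 ≠ ⊤ := (hr1.trans_le le_top).ne
  set r1 : ℝ≥0 := r0.toNNReal with hr1def
  have hcoe : (r1 : ℝ≥0∞) = r0 := ENNReal.coe_toNNReal hr0top
  set r : ℝ := max r1 (1/2) with hrdef
  have hrpos : 0 < r := lt_max_of_lt_right (by norm_num)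
  have hrlt : r < 1 := by
    apply max_lt ?_ (by norm_num)
    have h : (r1 : ℝ≥0∞) < 1 := hcoe ▸ hr1
    rw [ENNReal.coe_lt_one_iff] at h
    exact_mod_cast h
  -- ‖A ^ k‖ ≤ r ^ k for k ≥ K
  have hbig : ∀ k ≥ K, ‖A ^ k‖ ≤ r ^ k := by
    intro k hk
    obtain ⟨h1, h2⟩ := hK k hk
    have hk0 : (1 / (k : ℝ)) * k = 1 := by field_simp
    have hx : (‖A ^ k‖₊ : ℝ≥0∞) ≤ r0 ^ (k : ℝ) := by
      calc (‖A ^ k‖₊ : ℝ≥0∞) = ((‖A ^ k‖₊ : ℝ≥0∞) ^ (1 / (k : ℝ))) ^ (k : ℝ) := by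
            rw [← ENNReal.rpow_mul, hk0, ENNReal.rpow_one]
        _ ≤ r0 ^ (k : ℝ) := ENNReal.rpow_le_rpow h1.le (by positivity)
    rw [← hcoe, ← ENNReal.coe_rpow_of_nonneg _ (by positivity), ENNReal.coe_le_coe] at hx
    have hx' : ‖A ^ k‖₊ ≤ r1 ^ k := by rwa [← NNReal.rpow_natCast r1 k]
    calc ‖A ^ k‖ ≤ (r1 : ℝ) ^ k := by exact_mod_cast hx'
      _ ≤ r ^ k := by
          apply pow_le_pow_left₀ (by positivity)
          exact le_max_of_le_left le_rfl
  -- norms of real powers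
  have hpowmap : ∀ k : ℕ, A ^ k = (Φ ^ k).map (fun x => (x : ℂ)) := by
    intro k
    have : A = (Complex.ofRealHom.mapMatrix : Matrix (Fin n) (Fin n) ℝ →+* _) Φ := rfl
    rw [this, ← map_pow]
    rfl
  have hΦnorm : ∀ k : ℕ, ‖Φ ^ k‖ = ‖A ^ k‖ := by
    intro k
    rw [hpowmap k, norm_map_complex]
  -- uniform bound
  set C : ℝ := 1 + ∑ k ∈ Finset.range K, ‖Φ ^ k‖ / r ^ k with hCdef
  have hsum_nonneg : 0 ≤ ∑ k ∈ Finset.range K, ‖Φ ^ k‖ / r ^ k :=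
    Finset.sum_nonneg fun k _ => by positivity
  have hC1 : 1 ≤ C := by simp only [hCdef]; linarith
  have hCbound : ∀ k : ℕ, ‖Φ ^ k‖ ≤ C * r ^ k := by
    intro k
    rcases le_or_gt K k with hk | hk
    · calc ‖Φ ^ k‖ = ‖A ^ k‖ := hΦnorm k
        _ ≤ r ^ k := hbig k hk
        _ ≤ C * r ^ k := le_mul_of_one_le_left (by positivity) hC1
    · have hmem : k ∈ Finset.range K := Finset.mem_range.mpr hk
      have h1 : ‖Φ ^ k‖ / r ^ k ≤ ∑ j ∈ Finset.range K, ‖Φ ^ j‖ / r ^ j :=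
        Finset.single_le_sum (f := fun j => ‖Φ ^ j‖ / r ^ j) (fun j _ => by positivity) hmem
      have h2 : ‖Φ ^ k‖ / r ^ k ≤ C := by simp only [hCdef]; linarith
      rwa [div_le_iff₀ (by positivity)] at h2
  refine ⟨C, r, hrpos, hrlt, fun k v => ?_⟩
  calc ‖(Φ ^ k).mulVec v‖ ≤ ‖Φ ^ k‖ * ‖v‖ := Matrix.linfty_opNorm_mulVec _ _
    _ ≤ C * r ^ k * ‖v‖ := mul_le_mul_of_nonneg_right (hCbound k) (norm_nonneg _)

end MatrixBound

theorem stmt_2 {n : ℕ} (Φ : Matrix (Fin n) (Fin n) ℝ) (c : ℕ → Fin n → ℝ)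
    (hρ : ∀ z ∈ spectrum ℂ (Φ.map (fun x => (x : ℂ))), ‖z‖ < 1)
    (hc : Tendsto c atTop (nhds 0)) :
    Tendsto (fun t => ∑ k ∈ Finset.range t, (Φ ^ k).mulVec (c (t - 1 - k)))
      atTop (nhds 0) := by
  obtain ⟨C, r, hr0, hr1, hCr⟩ := pow_norm_le Φ hρ
  have hd : Tendsto (fun t => ‖c t‖) atTop (nhds 0) :=
    tendsto_zero_iff_norm_tendsto_zero.mp hc
  have hS := convAux hr0 hr1 (fun t => ‖c t‖) (fun t => norm_nonneg _) hd
  rw [tendsto_zero_iff_norm_tendsto_zero]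
  refine squeeze_zero (fun t => norm_nonneg _)
    (g := fun t => C * ∑ k ∈ Finset.range t, r ^ k * ‖c (t - 1 - k)‖) (fun t => ?_) ?_
  · calc ‖∑ k ∈ Finset.range t, (Φ ^ k).mulVec (c (t - 1 - k))‖
        ≤ ∑ k ∈ Finset.range t, ‖(Φ ^ k).mulVec (c (t - 1 - k))‖ := norm_sum_le _ _
      _ ≤ ∑ k ∈ Finset.range t, C * r ^ k * ‖c (t - 1 - k)‖ :=
          Finset.sum_le_sum fun k _ => hCr k _
      _ = C * ∑ k ∈ Finset.range t, r ^ k * ‖c (t - 1 - k)‖ := by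
          rw [Finset.mul_sum]
          exact Finset.sum_congr rfl fun k _ => by ring
  · simpa using hS.const_mul C
end

section
/- Consider the MAS x(t+1) = (I_M ⊗ A + L ⊗ BK) x(t), where L is the Laplacian of a connected undirected graph with eigenvalues 0 = λ₁ < λ₂ ≤ ⋯ ≤ λ_M. If ρ(A + λᵢ BK) < 1 for all i = 2,…,M, then for every initial condition x(0), the distance of x(t) to the consensus set C tends to zero as t → ∞, i.e., ‖xᵢ(t) − xⱼ(t)‖ → 0 for all pairs i,j. -/
open Filter Matrix
open scoped Kronecker

attribute [local instance] Matrix.linftyOpNormedRing Matrix.linftyOpNormedAlgebra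

lemma entry_norm_le {p : ℕ} (Mt : Matrix (Fin p) (Fin p) ℂ) (i j : Fin p) : ‖Mt i j‖ ≤ ‖Mt‖ := by
  have h1 : ‖Mt i j‖₊ ≤ ‖Mt‖₊ := by
    rw [Matrix.linfty_opNNNorm_def]
    exact le_trans (Finset.single_le_sum (f := fun j => ‖Mt i j‖₊) (fun _ _ => zero_le)
      (Finset.mem_univ j)) (Finset.le_sup (f := fun i => ∑ j, ‖Mt i j‖₊) (Finset.mem_univ i))
  exact h1

lemma pow_entry_tendsto_zero {p : ℕ} (N : Matrix (Fin p) (Fin p) ℝ)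
    (h : ∀ z ∈ spectrum ℂ (N.map (fun x => (x : ℂ))), ‖z‖ < 1) (k l : Fin p) :
    Tendsto (fun t => (N ^ t) k l) atTop (nhds 0) := by
  haveI : NeZero p := ⟨fun hp => by subst hp; exact k.elim0⟩
  haveI : CompleteSpace (Matrix (Fin p) (Fin p) ℂ) := FiniteDimensional.complete ℂ _
  set a : Matrix (Fin p) (Fin p) ℂ := N.map (fun x => (x : ℂ)) with ha
  have hco : (fun x : ℝ => (x : ℂ)) = ⇑(algebraMap ℝ ℂ) := rfl
  have hmap : ∀ t : ℕ, a ^ t = (N ^ t).map (fun x => (x : ℂ)) := by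
    intro t
    rw [ha, hco, ← RingHom.mapMatrix_apply, ← RingHom.mapMatrix_apply, ← map_pow]
  have hρ : spectralRadius ℂ a < 1 := by
    have := spectrum.spectralRadius_lt_of_forall_lt a (r := 1)
      (fun z hz => by have := h z hz; rw [← coe_nnnorm] at this; exact_mod_cast this)
    simpa using this
  obtain ⟨c, hc1, hc2⟩ := exists_between hρ
  lift c to NNReal using (hc2.trans_le le_top).ne
  have hclt1 : (c : ℝ) < 1 := by exact_mod_cast hc2
  have hgel := spectrum.pow_nnnorm_pow_one_div_tendsto_nhds_spectralRadius a
  have hev : ∀ᶠ t : ℕ in atTop, (‖a ^ t‖₊ : ENNReal) ^ (1 / (t : ℝ)) < c :=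
    hgel.eventually_lt_const hc1
  have hev2 : ∀ᶠ t : ℕ in atTop, ‖(N ^ t) k l‖ ≤ (c : ℝ) ^ t := by
    filter_upwards [hev, eventually_ge_atTop 1] with t ht ht1
    have htne : (t : ℝ) ≠ 0 := by positivity
    have h1 : (‖a ^ t‖₊ : ENNReal) < (c : ENNReal) ^ t := by
      have := ENNReal.rpow_lt_rpow ht (by positivity : (0:ℝ) < (t : ℝ))
      rwa [← ENNReal.rpow_mul, one_div, inv_mul_cancel₀ htne, ENNReal.rpow_one,
        ENNReal.rpow_natCast] at this
    have h2 : ‖a ^ t‖ ≤ (c : ℝ) ^ t := by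
      have h3 : ‖a ^ t‖₊ ≤ c ^ t := by exact_mod_cast h1.le
      exact_mod_cast h3
    calc ‖(N ^ t) k l‖ = ‖(a ^ t) k l‖ := by rw [hmap]; simp [Matrix.map_apply]
      _ ≤ ‖a ^ t‖ := entry_norm_le _ k l
      _ ≤ (c : ℝ) ^ t := h2
  exact squeeze_zero_norm' hev2 (tendsto_pow_atTop_nhds_zero_of_lt_one c.coe_nonneg hclt1)

theorem stmt_8 {n m M : ℕ} [NeZero M]
    (A : Matrix (Fin n) (Fin n) ℝ) (B : Matrix (Fin n) (Fin m) ℝ)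
    (K : Matrix (Fin m) (Fin n) ℝ)
    (L U : Matrix (Fin M) (Fin M) ℝ) (lam : Fin M → ℝ)
    (hLsym : L.IsSymm)
    (hLones : L.mulVec (fun _ => (1 : ℝ)) = 0)
    (hU : Uᵀ * U = 1)
    (hUcol : ∀ i : Fin M, U i 0 = 1 / Real.sqrt M)
    (hdiag : Uᵀ * L * U = Matrix.diagonal lam)
    (hlam0 : lam 0 = 0)
    (hρ : ∀ i : Fin M, i ≠ 0 →
      ∀ z ∈ spectrum ℂ ((A + lam i • (B * K)).map (fun x => (x : ℂ))), ‖z‖ < 1)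
    (x : ℕ → Fin M × Fin n → ℝ)
    (hdyn : ∀ t, x (t + 1) =
      ((1 : Matrix (Fin M) (Fin M) ℝ) ⊗ₖ A + L ⊗ₖ (B * K)).mulVec (x t)) :
    ∀ i j : Fin M,
      Tendsto (fun t => (fun k : Fin n => x t (i, k) - x t (j, k)))
        atTop (nhds 0) := by
  intro i j
  set G : Matrix (Fin M × Fin n) (Fin M × Fin n) ℝ :=
    (1 : Matrix (Fin M) (Fin M) ℝ) ⊗ₖ A + L ⊗ₖ (B * K) with hG
  set D : Matrix (Fin M) (Fin M) ℝ := Matrix.diagonal lam with hD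
  set H : Matrix (Fin M × Fin n) (Fin M × Fin n) ℝ :=
    (1 : Matrix (Fin M) (Fin M) ℝ) ⊗ₖ A + D ⊗ₖ (B * K) with hH
  set P : Matrix (Fin M × Fin n) (Fin M × Fin n) ℝ :=
    Uᵀ ⊗ₖ (1 : Matrix (Fin n) (Fin n) ℝ) with hP
  set Q : Matrix (Fin M × Fin n) (Fin M × Fin n) ℝ :=
    U ⊗ₖ (1 : Matrix (Fin n) (Fin n) ℝ) with hQ
  have hUUT : U * Uᵀ = 1 := mul_eq_one_comm.mp hU
  have hTL : Uᵀ * L = D * Uᵀ := by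
    calc Uᵀ * L = (Uᵀ * L) * (U * Uᵀ) := by rw [hUUT, mul_one]
      _ = (Uᵀ * L * U) * Uᵀ := by rw [Matrix.mul_assoc (Uᵀ * L)]
      _ = D * Uᵀ := by rw [hdiag]
  have hPG : P * G = H * P := by
    rw [hP, hG, hH, Matrix.mul_add, Matrix.add_mul]
    rw [← Matrix.mul_kronecker_mul, ← Matrix.mul_kronecker_mul,
      ← Matrix.mul_kronecker_mul, ← Matrix.mul_kronecker_mul]
    rw [Matrix.mul_one, Matrix.one_mul, Matrix.mul_one, Matrix.one_mul,
      Matrix.mul_one, Matrix.one_mul, hTL]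
  set y : ℕ → Fin M × Fin n → ℝ := fun t => P.mulVec (x t) with hy
  have hyrec : ∀ t, y (t + 1) = H.mulVec (y t) := by
    intro t
    rw [hy]
    simp only [hdyn t]
    rw [Matrix.mulVec_mulVec, Matrix.mulVec_mulVec, hPG]
  -- block structure of H
  have hHmv : ∀ (v : Fin M × Fin n → ℝ) (p : Fin M) (k : Fin n),
      H.mulVec v (p, k) = ((A + lam p • (B * K)).mulVec (fun l => v (p, l))) k := by
    intro v p k
    simp only [hH, Matrix.mulVec, dotProduct, Fintype.sum_prod_type,
      Matrix.add_apply, Matrix.kroneckerMap_apply, Matrix.one_apply, hD,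
      Matrix.diagonal_apply, Matrix.smul_apply, smul_eq_mul]
    rw [Finset.sum_comm]
    simp [ite_mul, zero_mul, Finset.mul_sum, Finset.sum_add_distrib, add_mul]
  have hyblock : ∀ p t, (fun k => y t (p, k)) =
      ((A + lam p • (B * K)) ^ t).mulVec (fun k => y 0 (p, k)) := by
    intro p t
    induction t with
    | zero => simp
    | succ t ih =>
      funext k
      rw [hyrec t, hHmv, ih, Matrix.mulVec_mulVec, ← pow_succ']
  -- recover x from y
  have hxy : ∀ t (i : Fin M) (k : Fin n), x t (i, k) = ∑ p, U i p * y t (p, k) := by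
    intro t i k
    have h1 : Q.mulVec (y t) = x t := by
      rw [hy, Matrix.mulVec_mulVec, hQ, hP, ← Matrix.mul_kronecker_mul, hUUT,
        Matrix.one_mul, Matrix.one_kronecker_one, Matrix.one_mulVec]
    have h2 := congrFun h1 (i, k)
    rw [← h2]
    simp only [hQ, Matrix.mulVec, dotProduct, Fintype.sum_prod_type,
      Matrix.kroneckerMap_apply, Matrix.one_apply, ite_mul, zero_mul, mul_ite, mul_zero]
    refine Finset.sum_congr rfl fun p _ => ?_
    simp
  rw [tendsto_pi_nhds]
  intro k
  have hlim : ∀ p : Fin M, Tendsto (fun t => (U i p - U j p) * y t (p, k)) atTop (nhds 0) := by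
    intro p
    by_cases hp : p = 0
    · subst hp
      have : U i 0 - U j 0 = 0 := by rw [hUcol i, hUcol j, sub_self]
      simp [this]
    · have hN := hρ p hp
      have hterm : Tendsto (fun t => y t (p, k)) atTop (nhds 0) := by
        have heq : ∀ t, y t (p, k) =
            ∑ l, ((A + lam p • (B * K)) ^ t) k l * y 0 (p, l) := by
          intro t
          have := congrFun (hyblock p t) k
          simpa [Matrix.mulVec, dotProduct] using this
        simp only [heq]
        have : Tendsto (fun t : ℕ => ∑ l, ((A + lam p • (B * K)) ^ t) k l * y 0 (p, l))
            atTop (nhds (∑ l : Fin n, 0 * y 0 (p, l))) := by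
          refine tendsto_finset_sum _ fun l _ => ?_
          exact (pow_entry_tendsto_zero _ hN k l).mul_const _
        simpa using this
      simpa using hterm.const_mul (U i p - U j p)
  have hsum : Tendsto (fun t => ∑ p, (U i p - U j p) * y t (p, k)) atTop (nhds 0) := by
    have := tendsto_finset_sum (Finset.univ : Finset (Fin M)) (fun p _ => hlim p)
    simpa using this
  refine hsum.congr fun t => ?_
  rw [hxy t i k, hxy t j k, ← Finset.sum_sub_distrib]
  exact Finset.sum_congr rfl fun p _ => by ring
end
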